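/- Let n be a positive integer and K a field. There exists a monomial order ≻ on the polynomial ring K[x_e : e ∈ P] (depending only on n) such that for every positive integer k and every non-decreasing k-coloring z of {1,…,n}, the set {x^{γ⁺} − x^{γ⁻} : γ ∈ M_{n,z}} is a Gröbner basis for the toric ideal I_{DC_{n,z}} with respect to ≻; that is, for every nonzero f ∈ I_{DC_{n,z}}, the leading monomial in_≻(f) is divisible by in_≻(x^{γ⁺} − x^{γ⁻}) for some γ ∈ M_{n,z}. -/

import Mathlib

open Finset

/-- The set `P` of 2-element subsets of `{1,…,n}`, encoded as ordered pairs. -/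
abbrev Edge (n : ℕ) : Type := {p : Fin n × Fin n // p.1 < p.2}

/-- Entry `γ_{uv}` of a vector `γ ∈ ℤ^P` at the unordered pair `{u,v}` (0 when `u = v`). -/
def ent {n : ℕ} (γ : Edge n → ℤ) (u v : Fin n) : ℤ :=
  if h : u < v then γ ⟨(u, v), h⟩ else if h : v < u then γ ⟨(v, u), h⟩ else 0

/-- Entry at `{u,v}` of a vector in `ℕ^P`. -/
def entN {n : ℕ} (x : Edge n → ℕ) (u v : Fin n) : ℕ :=
  if h : u < v then x ⟨(u, v), h⟩ else if h : v < u then x ⟨(v, u), h⟩ else 0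

/-- Degree sequence: `d(γ)_u = ∑_{v ≠ u} γ_{uv}`. -/
def degSeq {n : ℕ} (γ : Edge n → ℤ) (u : Fin n) : ℤ := ∑ v, ent γ u v

/-- Color sequence: `c(γ)_{ij} = ∑ γ_{uv}` over `{u,v} ∈ P` with `{z u, z v} = {i,j}`. -/
def colorSeq {n k : ℕ} (z : Fin n → Fin k) (γ : Edge n → ℤ) (i j : Fin k) : ℤ :=
  ∑ e : Edge n,
    if (z e.1.1 = i ∧ z e.1.2 = j) ∨ (z e.1.1 = j ∧ z e.1.2 = i) then γ e else 0

/-- `γ ∈ ker_ℤ DC_{n,z}`: both the degree sequence and the color sequence vanish. -/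
def inKer {n k : ℕ} (z : Fin n → Fin k) (γ : Edge n → ℤ) : Prop :=
  (∀ u, degSeq γ u = 0) ∧ ∀ i j, colorSeq z γ i j = 0

/-- The 1-norm `‖γ‖₁ = ∑_{e ∈ P} |γ_e|`. -/
def norm1 {n : ℕ} (γ : Edge n → ℤ) : ℤ := ∑ e, |γ e|

/-- The set of moves `M_{n,z} = {γ ∈ ker_ℤ DC_{n,z} : ‖γ‖₁ = 4}`. -/
def MSet {n k : ℕ} (z : Fin n → Fin k) : Set (Edge n → ℤ) :=
  {γ | inKer z γ ∧ norm1 γ = 4}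

/-- Degree sequence of a vector in `ℕ^P`. -/
def degSeqN {n : ℕ} (x : Edge n → ℕ) (u : Fin n) : ℕ := ∑ v, entN x u v

/-- Color sequence of a vector in `ℕ^P`. -/
def colorSeqN {n k : ℕ} (z : Fin n → Fin k) (x : Edge n → ℕ) (i j : Fin k) : ℕ :=
  ∑ e : Edge n,
    if (z e.1.1 = i ∧ z e.1.2 = j) ∨ (z e.1.1 = j ∧ z e.1.2 = i) then x e else 0

/-- The fiber `F(b) = {x ∈ ℕ^P : DC_{n,z} x = b}`, where `b = (d; c)`. -/
def Fiber {n k : ℕ} (z : Fin n → Fin k) (d : Fin n → ℤ) (c : Fin k → Fin k → ℤ) :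
    Set (Edge n → ℕ) :=
  {x | (∀ u, (degSeqN x u : ℤ) = d u) ∧ ∀ i j, (colorSeqN z x i j : ℤ) = c i j}

/-- The simple fiber `F̃(b) = F(b) ∩ {0,1}^P`. -/
def SimpleFiber {n k : ℕ} (z : Fin n → Fin k) (d : Fin n → ℤ) (c : Fin k → Fin k → ℤ) :
    Set (Edge n → ℕ) :=
  {x | x ∈ Fiber z d c ∧ ∀ e, x e ≤ 1}

/-- The difference `x − x' ∈ ℤ^P` of two vectors in `ℕ^P`. -/
def diff {n : ℕ} (x x' : Edge n → ℕ) : Edge n → ℤ := fun e => (x e : ℤ) - (x' e : ℤ)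

/-- The monomial map `φ_β : x_{uv} ↦ s_u s_v t_{z(u)z(v)}` defining the toric ideal. -/
noncomputable def phiBeta (K : Type*) [Field K] {n k : ℕ} (z : Fin n → Fin k) :
    MvPolynomial (Edge n) K →ₐ[K] MvPolynomial (Fin n ⊕ Fin k × Fin k) K :=
  MvPolynomial.aeval fun e =>
    MvPolynomial.X (Sum.inl e.1.1) * MvPolynomial.X (Sum.inl e.1.2) *
      MvPolynomial.X (Sum.inr (min (z e.1.1) (z e.1.2), max (z e.1.1) (z e.1.2)))

/-- The exponent vector `γ⁺ = max(γ, 0)`. -/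
noncomputable def expPos {n : ℕ} (γ : Edge n → ℤ) : Edge n →₀ ℕ :=
  Finsupp.equivFunOnFinite.symm fun e => (γ e).toNat

/-- The exponent vector `γ⁻ = max(−γ, 0)`. -/
noncomputable def expNeg {n : ℕ} (γ : Edge n → ℤ) : Edge n →₀ ℕ :=
  Finsupp.equivFunOnFinite.symm fun e => (-γ e).toNat

/-- The binomial `x^{γ⁺} − x^{γ⁻}` associated to `γ ∈ ℤ^P`. -/
noncomputable def binom (K : Type*) [Field K] {n : ℕ} (γ : Edge n → ℤ) :
    MvPolynomial (Edge n) K :=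
  MvPolynomial.monomial (expPos γ) (1 : K) - MvPolynomial.monomial (expNeg γ) (1 : K)

/-- The variable `x_{ab}` for an unordered pair `{a,b}` with `a ≠ b`. -/
noncomputable def edgeVar (K : Type*) [Field K] {n : ℕ} (a b : Fin n) :
    MvPolynomial (Edge n) K :=
  if h : a < b then MvPolynomial.X ⟨(a, b), h⟩
  else if h : b < a then MvPolynomial.X ⟨(b, a), h⟩ else 1

/-- `α` is the leading exponent (leading monomial) of `f` with respect to the strict
order `r` (where `r β α` means `β ≺ α`). -/
def IsLeading {n : ℕ} {K : Type*} [CommSemiring K]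
    (r : (Edge n →₀ ℕ) → (Edge n →₀ ℕ) → Prop)
    (f : MvPolynomial (Edge n) K) (α : Edge n →₀ ℕ) : Prop :=
  α ∈ f.support ∧ ∀ β ∈ f.support, β ≠ α → r β α


namespace GBOrder

variable {n : ℕ}

/-- Key of an edge: sort by larger endpoint ascending, then smaller endpoint descending. -/
def ρ (e : Edge n) : ℕ := (e.1.2 : ℕ) * n + ((n - 1) - (e.1.1 : ℕ))

lemma key_lt_iff {a b c d : ℕ} (hb : b < n) (hd : d < n) :
    (a * n + b < c * n + d ↔ (a < c ∨ (a = c ∧ b < d))) := by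
  constructor
  · intro h
    rcases lt_trichotomy a c with h' | h' | h'
    · exact Or.inl h'
    · subst h'; exact Or.inr ⟨rfl, by omega⟩
    · exfalso
      have h2 : (c + 1) * n ≤ a * n := Nat.mul_le_mul_right n h'
      have hexp : (c + 1) * n = c * n + n := by ring
      omega
  · rintro (h' | ⟨h', h''⟩)
    · have h2 : (a + 1) * n ≤ c * n := Nat.mul_le_mul_right n h'
      have hexp : (a + 1) * n = a * n + n := by ring
      omega
    · subst h'; omega

lemma rho_lt_iff {e f : Edge n} :
    ρ e < ρ f ↔ ((e.1.2 : ℕ) < (f.1.2 : ℕ) ∨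
      (((e.1.2 : ℕ) = (f.1.2 : ℕ)) ∧ (f.1.1 : ℕ) < (e.1.1 : ℕ))) := by
  have h1 : (e.1.1 : ℕ) < (e.1.2 : ℕ) := e.2
  have h1' : (f.1.1 : ℕ) < (f.1.2 : ℕ) := f.2
  have h2 : (e.1.2 : ℕ) < n := e.1.2.isLt
  have h2' : (f.1.2 : ℕ) < n := f.1.2.isLt
  rw [ρ, ρ, key_lt_iff (by omega) (by omega)]
  omega

lemma rho_inj : Function.Injective (ρ (n := n)) := by
  intro e f h
  have h1 : (e.1.1 : ℕ) < (e.1.2 : ℕ) := e.2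
  have h1' : (f.1.1 : ℕ) < (f.1.2 : ℕ) := f.2
  have A : ¬ (ρ e < ρ f) := by omega
  have B : ¬ (ρ f < ρ e) := by omega
  rw [rho_lt_iff] at A B
  apply Subtype.ext
  have hv : (e.1.2 : ℕ) = (f.1.2 : ℕ) := by omega
  have hu : (e.1.1 : ℕ) = (f.1.1 : ℕ) := by omega
  exact Prod.ext (Fin.ext hu) (Fin.ext hv)

/-- Edge comparison relation. -/
def elt (e f : Edge n) : Prop := ρ e < ρ f

instance edgeSTO : IsStrictTotalOrder (Edge n) (elt (n := n)) where
  trichotomous e f := by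
    rcases lt_trichotomy (ρ e) (ρ f) with h | h | h
    · exact fun h1 _ => absurd h h1
    · exact fun _ _ => rho_inj h
    · exact fun _ h2 => absurd h h2
  irrefl e := lt_irrefl _
  trans a b c := Nat.lt_trans

/-- Our lexicographic order on exponent functions. -/
def flex (x y : Edge n → ℕ) : Prop :=
  ∃ e : Edge n, (∀ d : Edge n, ρ d < ρ e → x d = y d) ∧ x e < y e

/-- The monomial order on `Edge n →₀ ℕ`. -/
def rel (a b : Edge n →₀ ℕ) : Prop := Finsupp.Lex (elt (n := n)) (· < ·) a b

lemma rel_iff_flex {a b : Edge n →₀ ℕ} : rel a b ↔ flex ⇑a ⇑b := Iff.rfl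

lemma rel_total (a b : Edge n →₀ ℕ) : rel a b ∨ a = b ∨ rel b a := by
  by_cases hab : a = b
  · exact Or.inr (Or.inl hab)
  have hne : ∃ e, a e ≠ b e := by
    by_contra hc
    push_neg at hc
    exact hab (Finsupp.ext hc)
  obtain ⟨e₀, he₀⟩ := hne
  have hsne : ((Finset.univ : Finset (Edge n)).filter (fun e => a e ≠ b e)).Nonempty :=
    ⟨e₀, by simp [he₀]⟩
  obtain ⟨m, hm, hmin⟩ := Finset.exists_min_image _ ρ hsne
  simp only [Finset.mem_filter, Finset.mem_univ, true_and] at hm hmin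
  have hpre : ∀ d, ρ d < ρ m → a d = b d := by
    intro d hd
    by_contra hc
    exact absurd hd (not_lt.2 (hmin d hc))
  rcases lt_or_gt_of_ne hm with h | h
  · exact Or.inl ⟨m, hpre, h⟩
  · exact Or.inr (Or.inr ⟨m, fun d hd => (hpre d hd).symm, h⟩)

lemma rel_trans {a b c : Edge n →₀ ℕ} (h1 : rel a b) (h2 : rel b c) : rel a c := by
  obtain ⟨i, hi, hi'⟩ := h1
  obtain ⟨j, hj, hj'⟩ := h2
  rcases lt_trichotomy (ρ i) (ρ j) with h | h | h
  · exact ⟨i, fun d hd => (hi d hd).trans (hj d (lt_trans hd h)), by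
      rw [← hj i h]; exact hi'⟩
  · have hij : i = j := rho_inj h
    subst hij
    exact ⟨i, fun d hd => (hi d hd).trans (hj d hd), lt_trans hi' hj'⟩
  · exact ⟨j, fun d hd => (hi d (lt_trans hd h)).trans (hj d hd), by
      rw [hi j h]; exact hj'⟩

lemma rel_irrefl (a : Edge n →₀ ℕ) : ¬ rel a a := by
  rintro ⟨j, _, hj⟩
  exact lt_irrefl _ hj

lemma rel_wf : WellFounded (rel (n := n)) :=
  Finsupp.Lex.wellFounded_of_finite (elt (n := n)) (wellFounded_lt)

lemma rel_add {a b δ : Edge n →₀ ℕ} (h : rel a b) : rel (a + δ) (b + δ) := by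
  obtain ⟨j, hj, hj'⟩ := h
  refine ⟨j, fun d hd => ?_, ?_⟩
  · simp only [Finsupp.add_apply]
    rw [hj d hd]
  · simp only [Finsupp.add_apply]
    omega

lemma rel_zero {a : Edge n →₀ ℕ} (h : a ≠ 0) : rel 0 a := by
  rcases rel_total 0 a with h1 | h1 | h1
  · exact h1
  · exact absurd h1.symm h
  · obtain ⟨j, _, hj⟩ := h1
    simp at hj

lemma flex_iff_rel {x y : Edge n → ℕ} :
    flex x y ↔ rel (Finsupp.equivFunOnFinite.symm x) (Finsupp.equivFunOnFinite.symm y) := by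
  rw [rel_iff_flex]
  rw [show ⇑(Finsupp.equivFunOnFinite.symm x) = x from Finsupp.equivFunOnFinite.apply_symm_apply x,
     show ⇑(Finsupp.equivFunOnFinite.symm y) = y from Finsupp.equivFunOnFinite.apply_symm_apply y]

lemma flex_trans {a b c : Edge n → ℕ} (h1 : flex a b) (h2 : flex b c) : flex a c := by
  rw [flex_iff_rel] at *
  exact rel_trans h1 h2

lemma flex_wf : WellFounded (flex (n := n)) := by
  have hsub : Subrelation (flex (n := n))
      (InvImage rel Finsupp.equivFunOnFinite.symm) := by
    intro x y h
    exact flex_iff_rel.1 h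
  exact Subrelation.wf hsub (InvImage.wf _ rel_wf)

end GBOrder
namespace GBOrder

variable {n : ℕ}

section Sums

variable {R : Type*} [NonAssocSemiring R]

/-- Generic version of `entN`/`ent`. -/
def entG (x : Edge n → R) (u v : Fin n) : R :=
  if h : u < v then x ⟨(u, v), h⟩ else if h : v < u then x ⟨(v, u), h⟩ else 0

lemma entG_eq_entN (x : Edge n → ℕ) (u v : Fin n) : entN x u v = entG x u v := rfl

lemma entG_eq_ent (x : Edge n → ℤ) (u v : Fin n) : ent x u v = entG x u v := rfl

/-- The total extension of `x` to ordered pairs. -/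
def Xf (x : Edge n → R) (p : Fin n × Fin n) : R :=
  if h : p.1 < p.2 then x ⟨p, h⟩ else 0

lemma entG_eq_add (x : Edge n → R) (m v : Fin n) :
    entG x m v = Xf x (m, v) + Xf x (v, m) := by
  rcases lt_trichotomy m v with h | h | h
  · simp [entG, Xf, h, lt_asymm h]
  · subst h
    simp [entG, Xf]
  · simp [entG, Xf, h, lt_asymm h]

lemma sum_pairs_eq_sum_edges (F : Fin n × Fin n → R) (hF : ∀ p, ¬ p.1 < p.2 → F p = 0) :
    ∑ p : Fin n × Fin n, F p = ∑ e : Edge n, F e.1 := by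
  rw [show (∑ p : Fin n × Fin n, F p)
      = ∑ p ∈ Finset.univ.filter (fun p : Fin n × Fin n => p.1 < p.2), F p by
    refine (Finset.sum_filter_of_ne ?_).symm
    intro p _ hp
    by_contra hc
    exact hp (hF p hc)]
  exact Finset.sum_subtype _ (by simp) F

lemma sum_weight (x : Edge n → R) (ω : Fin n → R) :
    ∑ m : Fin n, ω m * (∑ v : Fin n, entG x m v) =
      ∑ e : Edge n, (ω e.1.1 + ω e.1.2) * x e := by
  have key : ∑ m : Fin n, ω m * (∑ v : Fin n, entG x m v)
      = ∑ p : Fin n × Fin n, (ω p.1 + ω p.2) * Xf x p := by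
    have h1 : ∀ m, ω m * (∑ v : Fin n, entG x m v)
        = (∑ v : Fin n, ω m * Xf x (m, v)) + (∑ v : Fin n, ω m * Xf x (v, m)) := by
      intro m
      rw [Finset.mul_sum, ← Finset.sum_add_distrib]
      refine Finset.sum_congr rfl fun v _ => ?_
      rw [entG_eq_add, mul_add]
    calc ∑ m : Fin n, ω m * (∑ v : Fin n, entG x m v)
        = (∑ m : Fin n, ∑ v : Fin n, ω m * Xf x (m, v)) +
          (∑ m : Fin n, ∑ v : Fin n, ω m * Xf x (v, m)) := by
          rw [← Finset.sum_add_distrib]; exact Finset.sum_congr rfl fun m _ => h1 m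
      _ = (∑ p : Fin n × Fin n, ω p.1 * Xf x p) + (∑ p : Fin n × Fin n, ω p.2 * Xf x p) := by
          congr 1
          · exact (Fintype.sum_prod_type (f := fun p : Fin n × Fin n => ω p.1 * Xf x p)).symm
          · rw [Finset.sum_comm]
            exact (Fintype.sum_prod_type (f := fun p : Fin n × Fin n => ω p.2 * Xf x p)).symm
      _ = ∑ p : Fin n × Fin n, (ω p.1 + ω p.2) * Xf x p := by
          rw [← Finset.sum_add_distrib]
          exact Finset.sum_congr rfl fun p _ => (add_mul _ _ _).symm
  rw [key]
  rw [sum_pairs_eq_sum_edges _ (fun p hp => by rw [Xf, dif_neg hp, mul_zero])]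
  refine Finset.sum_congr rfl fun e _ => ?_
  have h : Xf x e.1 = x e := by rw [Xf, dif_pos e.2]
  rw [h]

end Sums

lemma degSeqN_weight (x : Edge n → ℕ) (ω : Fin n → ℕ) :
    ∑ m : Fin n, ω m * degSeqN x m = ∑ e : Edge n, (ω e.1.1 + ω e.1.2) * x e := by
  rw [← sum_weight]
  rfl

lemma degSeq_weight (x : Edge n → ℤ) (ω : Fin n → ℤ) :
    ∑ m : Fin n, ω m * degSeq x m = ∑ e : Edge n, (ω e.1.1 + ω e.1.2) * x e := by
  rw [← sum_weight]
  rfl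

lemma degSeqN_eq (x : Edge n → ℕ) (m : Fin n) :
    degSeqN x m = ∑ e : Edge n,
      ((if e.1.1 = m then 1 else 0) + (if e.1.2 = m then 1 else 0)) * x e := by
  have h := degSeqN_weight x (fun m' => if m' = m then 1 else 0)
  rw [show (∑ m' : Fin n, (if m' = m then 1 else 0) * degSeqN x m') = degSeqN x m by
    simp [ite_mul, Finset.sum_ite_eq']] at h
  rw [h]

lemma degSeq_eq (x : Edge n → ℤ) (m : Fin n) :
    degSeq x m = ∑ e : Edge n,
      ((if e.1.1 = m then 1 else 0) + (if e.1.2 = m then 1 else 0)) * x e := by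
  have h := degSeq_weight x (fun m' => if m' = m then 1 else 0)
  rw [show (∑ m' : Fin n, ((if m' = m then 1 else 0) : ℤ) * degSeq x m') = degSeq x m by
    simp [ite_mul, Finset.sum_ite_eq']] at h
  rw [h]

lemma degSeqN_pos_of_edge {x : Edge n → ℕ} {e : Edge n} {m : Fin n} (hx : 0 < x e)
    (hm : e.1.1 = m ∨ e.1.2 = m) : 0 < degSeqN x m := by
  rw [degSeqN_eq]
  have hterm : 0 < ((if e.1.1 = m then 1 else 0) + (if e.1.2 = m then 1 else 0)) * x e := by
    rcases hm with h | h <;> simp [h] <;> omega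
  calc 0 < ((if e.1.1 = m then 1 else 0) + (if e.1.2 = m then 1 else 0)) * x e := hterm
    _ ≤ _ := Finset.single_le_sum
      (f := fun e' : Edge n => ((if e'.1.1 = m then 1 else 0) + (if e'.1.2 = m then 1 else 0)) * x e')
      (fun e' _ => Nat.zero_le _) (Finset.mem_univ e)

lemma exists_edge_of_degSeqN_pos {x : Edge n → ℕ} {m : Fin n} (h : 0 < degSeqN x m) :
    ∃ e : Edge n, 0 < x e ∧ (e.1.1 = m ∨ e.1.2 = m) := by
  rw [degSeqN_eq] at h
  by_contra hc
  push_neg at hc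
  have : ∀ e : Edge n,
      ((if e.1.1 = m then 1 else 0) + (if e.1.2 = m then 1 else 0)) * x e = 0 := by
    intro e
    by_cases h1 : e.1.1 = m
    · have this := hc e
      rcases Nat.eq_zero_or_pos (x e) with h0 | h0
      · rw [h0, mul_zero]
      · exact absurd h1 (this h0).1
    by_cases h2 : e.1.2 = m
    · have := hc e
      rcases Nat.eq_zero_or_pos (x e) with h0 | h0
      · rw [h0, mul_zero]
      · exact absurd h2 (this h0).2
    simp [h1, h2]
  rw [Finset.sum_eq_zero (fun e _ => this e)] at h
  exact lt_irrefl 0 h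

lemma colorSeqN_pos_of_edge {k : ℕ} {z : Fin n → Fin k} {x : Edge n → ℕ} {e : Edge n}
    {i j : Fin k} (hx : 0 < x e)
    (hm : (z e.1.1 = i ∧ z e.1.2 = j) ∨ (z e.1.1 = j ∧ z e.1.2 = i)) :
    0 < colorSeqN z x i j := by
  rw [colorSeqN]
  calc 0 < (if (z e.1.1 = i ∧ z e.1.2 = j) ∨ (z e.1.1 = j ∧ z e.1.2 = i) then x e else 0) := by
        rw [if_pos hm]; exact hx
    _ ≤ _ := Finset.single_le_sum
      (f := fun e' : Edge n =>
        if (z e'.1.1 = i ∧ z e'.1.2 = j) ∨ (z e'.1.1 = j ∧ z e'.1.2 = i) then x e' else 0)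
      (fun e' _ => Nat.zero_le _) (Finset.mem_univ e)

lemma exists_edge_of_colorSeqN_pos {k : ℕ} {z : Fin n → Fin k} {x : Edge n → ℕ}
    {i j : Fin k} (h : 0 < colorSeqN z x i j) :
    ∃ e : Edge n, 0 < x e ∧
      ((z e.1.1 = i ∧ z e.1.2 = j) ∨ (z e.1.1 = j ∧ z e.1.2 = i)) := by
  rw [colorSeqN] at h
  by_contra hc
  push_neg at hc
  have : ∀ e : Edge n,
      (if (z e.1.1 = i ∧ z e.1.2 = j) ∨ (z e.1.1 = j ∧ z e.1.2 = i) then x e else 0) = 0 := by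
    intro e
    by_cases h1 : (z e.1.1 = i ∧ z e.1.2 = j) ∨ (z e.1.1 = j ∧ z e.1.2 = i)
    · rw [if_pos h1]
      rcases Nat.eq_zero_or_pos (x e) with h0 | h0
      · exact h0
      · rcases h1 with ⟨ha, hb⟩ | ⟨ha, hb⟩
        · exact absurd hb ((hc e h0).1 ha)
        · exact absurd hb ((hc e h0).2 ha)
    · rw [if_neg h1]
  rw [Finset.sum_eq_zero (fun e _ => this e)] at h
  exact lt_irrefl 0 h

end GBOrder
namespace GBOrder

variable {n : ℕ}

/-- Indicator vector of an edge. -/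
def χ (E : Edge n) : Edge n → ℤ := fun d => if d = E then 1 else 0

/-- The move that removes edges `E1, E2` and adds edges `F1, F2`. -/
def moveγ (E1 E2 F1 F2 : Edge n) : Edge n → ℤ :=
  fun d => χ E1 d + χ E2 d - χ F1 d - χ F2 d

section Move

variable {E1 E2 F1 F2 : Edge n}

/-- distinctness bundle -/
structure MoveOK (E1 E2 F1 F2 : Edge n) : Prop where
  h12 : E1 ≠ E2
  h1a : E1 ≠ F1
  h1b : E1 ≠ F2
  h2a : E2 ≠ F1
  h2b : E2 ≠ F2
  hab : F1 ≠ F2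

lemma sum_mul_moveγ (c : Edge n → ℤ) :
    ∑ e : Edge n, c e * moveγ E1 E2 F1 F2 e = c E1 + c E2 - c F1 - c F2 := by
  have expand : ∀ e : Edge n, c e * moveγ E1 E2 F1 F2 e
      = c e * χ E1 e + c e * χ E2 e - c e * χ F1 e - c e * χ F2 e := by
    intro e
    rw [moveγ]
    ring
  rw [Finset.sum_congr rfl (fun e _ => expand e), Finset.sum_sub_distrib,
    Finset.sum_sub_distrib, Finset.sum_add_distrib]
  have key : ∀ E : Edge n, ∑ e : Edge n, c e * χ E e = c E := by
    intro E
    unfold χ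
    simp [mul_ite, Finset.sum_ite_eq']
  rw [key E1, key E2, key F1, key F2]

lemma moveγ_apply (hok : MoveOK E1 E2 F1 F2) :
    (moveγ E1 E2 F1 F2 E1 = 1) ∧ (moveγ E1 E2 F1 F2 E2 = 1) ∧
    (moveγ E1 E2 F1 F2 F1 = -1) ∧ (moveγ E1 E2 F1 F2 F2 = -1) ∧
    (∀ d, d ≠ E1 → d ≠ E2 → d ≠ F1 → d ≠ F2 → moveγ E1 E2 F1 F2 d = 0) := by
  obtain ⟨h12, h1a, h1b, h2a, h2b, hab⟩ := hok
  refine ⟨?_, ?_, ?_, ?_, ?_⟩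
  · simp [moveγ, χ, h12, h1a, h1b, Ne.symm h12]
  · simp [moveγ, χ, Ne.symm h12, h2a, h2b]
  · simp [moveγ, χ, Ne.symm h1a, Ne.symm h2a, hab]
  · simp [moveγ, χ, Ne.symm h1b, Ne.symm h2b, Ne.symm hab]
  · intro d hd1 hd2 hd3 hd4
    simp [moveγ, χ, hd1, hd2, hd3, hd4]

lemma moveγ_mem_MSet {k : ℕ} (z : Fin n → Fin k) (hok : MoveOK E1 E2 F1 F2)
    (hdeg : ∀ m : Fin n,
      (((if E1.1.1 = m then 1 else 0) + (if E1.1.2 = m then 1 else 0) : ℤ) +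
       ((if E2.1.1 = m then 1 else 0) + (if E2.1.2 = m then 1 else 0)))
      = (((if F1.1.1 = m then 1 else 0) + (if F1.1.2 = m then 1 else 0)) +
         ((if F2.1.1 = m then 1 else 0) + (if F2.1.2 = m then 1 else 0))))
    (hcol : ∀ i j : Fin k,
      (((if (z E1.1.1 = i ∧ z E1.1.2 = j) ∨ (z E1.1.1 = j ∧ z E1.1.2 = i) then 1 else 0) : ℤ) +
       (if (z E2.1.1 = i ∧ z E2.1.2 = j) ∨ (z E2.1.1 = j ∧ z E2.1.2 = i) then 1 else 0))
      = ((if (z F1.1.1 = i ∧ z F1.1.2 = j) ∨ (z F1.1.1 = j ∧ z F1.1.2 = i) then 1 else 0) +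
         (if (z F2.1.1 = i ∧ z F2.1.2 = j) ∨ (z F2.1.1 = j ∧ z F2.1.2 = i) then 1 else 0))) :
    moveγ E1 E2 F1 F2 ∈ MSet z := by
  obtain ⟨m1, m2, m3, m4, m0⟩ := moveγ_apply hok
  refine ⟨⟨?_, ?_⟩, ?_⟩
  · intro m
    rw [degSeq_eq, sum_mul_moveγ
      (c := fun e => ((if e.1.1 = m then 1 else 0) + (if e.1.2 = m then 1 else 0) : ℤ))]
    have h := hdeg m
    omega
  · intro i j
    rw [colorSeq]
    have point : ∀ e : Edge n,
        (if (z e.1.1 = i ∧ z e.1.2 = j) ∨ (z e.1.1 = j ∧ z e.1.2 = i)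
          then moveγ E1 E2 F1 F2 e else 0)
        = (fun e => ((if (z e.1.1 = i ∧ z e.1.2 = j) ∨ (z e.1.1 = j ∧ z e.1.2 = i)
            then 1 else 0) : ℤ)) e * moveγ E1 E2 F1 F2 e := by
      intro e
      by_cases hcond : (z e.1.1 = i ∧ z e.1.2 = j) ∨ (z e.1.1 = j ∧ z e.1.2 = i)
      · simp [hcond]
      · simp [hcond]
    rw [Finset.sum_congr rfl (fun e _ => point e), sum_mul_moveγ]
    have h := hcol i j
    omega
  · rw [norm1]
    have point : ∀ e : Edge n, |moveγ E1 E2 F1 F2 e|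
        = (if e = E1 then 1 else 0) + (if e = E2 then 1 else 0)
          + (if e = F1 then 1 else 0) + (if e = F2 then 1 else 0) := by
      intro e
      by_cases h1 : e = E1
      · subst h1; simp [m1, hok.h12, hok.h1a, hok.h1b]
      by_cases h2 : e = E2
      · subst h2; simp [m2, h1, hok.h2a, hok.h2b]
      by_cases h3 : e = F1
      · subst h3; simp [m3, h1, h2, hok.hab]
      by_cases h4 : e = F2
      · subst h4; simp [m4, h1, h2, h3]
      · simp [m0 e h1 h2 h3 h4, h1, h2, h3, h4]
    rw [Finset.sum_congr rfl (fun e _ => point e)]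
    simp [Finset.sum_add_distrib, Finset.sum_ite_eq']

/-- A strictly decreasing applicable move. -/
def DecMove {k : ℕ} (z : Fin n → Fin k) (A : Edge n → ℕ) : Prop :=
  ∃ γ : Edge n → ℤ, γ ∈ MSet z ∧ (∀ e, (γ e).toNat ≤ A e) ∧
    flex (fun e => (-γ e).toNat) (fun e => (γ e).toNat)

lemma moveγ_DecMove {k : ℕ} (z : Fin n → Fin k) {A : Edge n → ℕ}
    (hok : MoveOK E1 E2 F1 F2) (hmem : moveγ E1 E2 F1 F2 ∈ MSet z)
    (hA1 : 0 < A E1) (hA2 : 0 < A E2)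
    (h12 : ρ E1 < ρ E2) (h1a : ρ E1 < ρ F1) (h1b : ρ E1 < ρ F2) :
    DecMove z A := by
  obtain ⟨m1, m2, m3, m4, m0⟩ := moveγ_apply hok
  refine ⟨moveγ E1 E2 F1 F2, hmem, ?_, ?_⟩
  · intro e
    by_cases he1 : e = E1
    · subst he1; rw [m1]; omega
    by_cases he2 : e = E2
    · subst he2; rw [m2]; omega
    by_cases he3 : e = F1
    · subst he3; rw [m3]; omega
    by_cases he4 : e = F2
    · subst he4; rw [m4]; omega
    · rw [m0 e he1 he2 he3 he4]; omega
  · refine ⟨E1, ?_, ?_⟩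
    · intro d hd
      have hne1 : d ≠ E1 := fun h => by subst h; exact lt_irrefl _ hd
      have hne2 : d ≠ E2 := fun h => by subst h; exact lt_asymm hd h12
      have hne3 : d ≠ F1 := fun h => by subst h; exact lt_asymm hd h1a
      have hne4 : d ≠ F2 := fun h => by subst h; exact lt_asymm hd h1b
      show (-moveγ E1 E2 F1 F2 d).toNat = (moveγ E1 E2 F1 F2 d).toNat
      rw [m0 d hne1 hne2 hne3 hne4]; rfl
    · show (-moveγ E1 E2 F1 F2 E1).toNat < (moveγ E1 E2 F1 F2 E1).toNat
      rw [m1]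
      norm_num

end Move

end GBOrder
namespace GBOrder

variable {n : ℕ} {k : ℕ}

lemma edge_ne {a b c d : Fin n} {h1 : a < b} {h2 : c < d} (hne : a ≠ c ∨ b ≠ d) :
    (⟨(a, b), h1⟩ : Edge n) ≠ ⟨(c, d), h2⟩ := by
  intro h
  have := Subtype.ext_iff.1 h
  rw [Prod.mk.injEq] at this
  rcases hne with h' | h' <;> [exact h' this.1; exact h' this.2]

lemma fin_coe_lt {a b : Fin n} (h : a < b) : (a : ℕ) < (b : ℕ) := h

/-- Decreasing move from a "disjoint" violation: edges `{a,b}, {c,d}` with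
`a<b<c<d` and `z b = z c`. -/
lemma decV1 (z : Fin n → Fin k) {A : Edge n → ℕ} {a b c d : Fin n}
    (hab : a < b) (hbc : b < c) (hcd : c < d) (hz : z b = z c)
    (h1 : 0 < A ⟨(a, b), hab⟩) (h2 : 0 < A ⟨(c, d), hcd⟩) : DecMove z A := by
  have hac : a < c := lt_trans hab hbc
  have hbd : b < d := lt_trans hbc hcd
  have hok : MoveOK (n := n) ⟨(a, b), hab⟩ ⟨(c, d), hcd⟩ ⟨(a, c), hac⟩ ⟨(b, d), hbd⟩ :=
    ⟨edge_ne (Or.inl (ne_of_lt hac)), edge_ne (Or.inr (ne_of_lt hbc)),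
     edge_ne (Or.inl (ne_of_lt hab)), edge_ne (Or.inl (ne_of_gt hac)),
     edge_ne (Or.inl (ne_of_gt hbc)), edge_ne (Or.inl (ne_of_lt hab))⟩
  refine moveγ_DecMove z hok ?_ h1 h2 ?_ ?_ ?_
  · refine moveγ_mem_MSet z hok (fun m => by dsimp only; ring) (fun i j => by
      dsimp only
      rw [hz])
  · rw [rho_lt_iff]
    exact Or.inl (fin_coe_lt hbd)
  · rw [rho_lt_iff]
    exact Or.inl (fin_coe_lt hbc)
  · rw [rho_lt_iff]
    exact Or.inl (fin_coe_lt hbd)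

/-- Decreasing move from a "nested" violation: edges `{a,d}, {b,c}` with
`a<b<c<d` and `z a = z b` or `z c = z d`. -/
lemma decV2 (z : Fin n → Fin k) {A : Edge n → ℕ} {a b c d : Fin n}
    (hab : a < b) (hbc : b < c) (hcd : c < d) (hz : z a = z b ∨ z c = z d)
    (had : a < d) (h1 : 0 < A ⟨(a, d), had⟩) (h2 : 0 < A ⟨(b, c), hbc⟩) :
    DecMove z A := by
  have hac : a < c := lt_trans hab hbc
  have hbd : b < d := lt_trans hbc hcd
  have hok : MoveOK (n := n) ⟨(b, c), hbc⟩ ⟨(a, d), had⟩ ⟨(a, c), hac⟩ ⟨(b, d), hbd⟩ :=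
    ⟨edge_ne (Or.inl (ne_of_gt hab)), edge_ne (Or.inl (ne_of_gt hab)),
     edge_ne (Or.inr (ne_of_lt hcd)), edge_ne (Or.inr (ne_of_gt hcd)),
     edge_ne (Or.inl (ne_of_lt hab)), edge_ne (Or.inl (ne_of_lt hab))⟩
  refine moveγ_DecMove z hok ?_ h2 h1 ?_ ?_ ?_
  · refine moveγ_mem_MSet z hok (fun m => by dsimp only; ring) (fun i j => ?_)
    dsimp only
    rcases hz with hz | hz
    · rw [hz]
      try ring
    · rw [hz]
      try ring
  · rw [rho_lt_iff]
    exact Or.inl (fin_coe_lt hcd)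
  · rw [rho_lt_iff]
    exact Or.inr ⟨rfl, fin_coe_lt hab⟩
  · rw [rho_lt_iff]
    exact Or.inl (fin_coe_lt hcd)

end GBOrder
namespace GBOrder

variable {n k : ℕ}

/-- Number of edges whose lower endpoint has color `c` equals a sum of color counts. -/
lemma sS_eq (z : Fin n → Fin k) (hz : Monotone z) (x : Edge n → ℕ) (c : Fin k) :
    (∑ e : Edge n, (if z e.1.1 = c then 1 else 0) * x e)
      = ∑ l ∈ Finset.univ.filter (fun l => c ≤ l), colorSeqN z x c l := by
  have hswap : ∑ l ∈ Finset.univ.filter (fun l => c ≤ l), colorSeqN z x c l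
      = ∑ e : Edge n, ∑ l ∈ Finset.univ.filter (fun l => c ≤ l),
          (if (z e.1.1 = c ∧ z e.1.2 = l) ∨ (z e.1.1 = l ∧ z e.1.2 = c) then x e else 0) := by
    rw [Finset.sum_comm]
    rfl
  rw [hswap]
  refine Finset.sum_congr rfl fun e _ => ?_
  have hmono : z e.1.1 ≤ z e.1.2 := hz (le_of_lt e.2)
  by_cases h1 : z e.1.1 = c
  · rw [if_pos h1, one_mul]
    rw [Finset.sum_eq_single_of_mem (z e.1.2)]
    · rw [if_pos (Or.inl ⟨h1, rfl⟩)]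
    · simp only [Finset.mem_filter, Finset.mem_univ, true_and]
      rw [← h1]; exact hmono
    · intro l hl hlne
      rw [if_neg]
      rintro (⟨-, h2⟩ | ⟨h2, h3⟩)
      · exact hlne h2.symm
      · simp only [Finset.mem_filter, Finset.mem_univ, true_and] at hl
        have hv : z e.1.2 = l := by rw [h3, ← h1, h2]
        exact hlne hv.symm
  · rw [if_neg h1, zero_mul]
    refine (Finset.sum_eq_zero fun l hl => ?_).symm
    simp only [Finset.mem_filter, Finset.mem_univ, true_and] at hl
    rw [if_neg]
    rintro (⟨h2, -⟩ | ⟨h2, h3⟩)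
    · exact h1 h2
    · exact h1 (le_antisymm (h3 ▸ hmono) (h2 ▸ hl))

end GBOrder
namespace GBOrder

variable {n k : ℕ}

lemma core (z : Fin n → Fin k) (hz : Monotone z) (A B : Edge n → ℕ)
    (hd : ∀ m, degSeqN A m = degSeqN B m)
    (hc : ∀ i j, colorSeqN z A i j = colorSeqN z B i j)
    (hdisj : ∀ e, A e = 0 ∨ B e = 0)
    (hA : ¬ DecMove z A) (hB : ¬ DecMove z B)
    (E : Edge n) (hAE : 0 < A E)
    (hmin : ∀ e : Edge n, 0 < A e ∨ 0 < B e → ρ E ≤ ρ e) : False := by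
  obtain ⟨⟨u, v⟩, huv⟩ := E
  set E : Edge n := ⟨(u, v), huv⟩ with hE
  have hBE : B E = 0 := by
    rcases hdisj E with h | h
    · omega
    · exact h
  have shape : ∀ e : Edge n, (0 < A e ∨ 0 < B e) → e ≠ E →
      ((v : ℕ) < (e.1.2 : ℕ) ∨ (((v : ℕ) = (e.1.2 : ℕ)) ∧ (e.1.1 : ℕ) < (u : ℕ))) := by
    intro e he hne
    have h1 : ρ E ≤ ρ e := hmin e he
    have h2 : ρ E ≠ ρ e := fun h => hne (rho_inj h).symm
    exact rho_lt_iff.1 (lt_of_le_of_ne h1 h2)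
  have hzuv : z u ≤ z v := hz (le_of_lt huv)
  by_cases hH1 : ∃ e : Edge n, 0 < B e ∧ e.1.2 = v ∧ e.1.1 < u
  · -- Case H1 : B has an edge {p, v} with p < u
    obtain ⟨eh, hBe, hev, hpu⟩ := hH1
    set p := eh.1.1 with hp
    have hpv : p < v := hev ▸ eh.2
    have hBpv : 0 < B ⟨(p, v), hpv⟩ := by
      have : eh = ⟨(p, v), hpv⟩ := Subtype.ext (Prod.ext rfl hev)
      rwa [this] at hBe
    have hApv : A ⟨(p, v), hpv⟩ = 0 := by
      rcases hdisj ⟨(p, v), hpv⟩ with h | h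
      · exact h
      · omega
    -- Step 1: A has an edge (p, s) with s > v, and z p < z u, z v < z s
    have hdegA : 0 < degSeqN A p := by
      rw [hd]
      exact degSeqN_pos_of_edge hBpv (Or.inl rfl)
    obtain ⟨eA, hAeA, hmA⟩ := exists_edge_of_degSeqN_pos hdegA
    have hpu' : (p : ℕ) < (u : ℕ) := hpu
    have huv' : (u : ℕ) < (v : ℕ) := huv
    have hAne : eA ≠ E := by
      intro h
      rw [h] at hmA
      rcases hmA with h' | h'
      · have h1 : (u : ℕ) = (p : ℕ) := congrArg Fin.val h'
        omega
      · have h1 : (v : ℕ) = (p : ℕ) := congrArg Fin.val h'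
        omega
    have hmA1 : eA.1.1 = p := by
      rcases hmA with h' | h'
      · exact h'
      · exfalso
        have hs := shape eA (Or.inl hAeA) hAne
        have h1 : (eA.1.2 : ℕ) = (p : ℕ) := congrArg Fin.val h'
        have h2 : (p : ℕ) < (u : ℕ) := hpu
        have h3 : (u : ℕ) < (v : ℕ) := huv
        omega
    set s := eA.1.2 with hs
    have hps : p < s := hmA1 ▸ eA.2
    have hsv : (v : ℕ) < (s : ℕ) := by
      have hsh := shape eA (Or.inl hAeA) hAne
      rcases hsh with h' | h'
      · exact h'
      · exfalso
        have : eA = ⟨(p, v), hpv⟩ :=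
          Subtype.ext (Prod.ext hmA1 (Fin.ext h'.1.symm))
        rw [this] at hAeA
        omega
    have hAps : 0 < A ⟨(p, s), hps⟩ := by
      have : eA = ⟨(p, s), hps⟩ := Subtype.ext (Prod.ext hmA1 rfl)
      rwa [this] at hAeA
    have hznest : ¬ (z p = z u ∨ z v = z s) := by
      intro hcond
      exact hA (decV2 z hpu huv hsv hcond (hpu.trans (huv.trans hsv)) hAps hAE)
    have hzpu : z p < z u := lt_of_le_of_ne (hz (le_of_lt hpu)) (fun h => hznest (Or.inl h))
    -- Step 2: A has an edge (q, r) in the layer (z p, z v)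
    have hcolA : 0 < colorSeqN z A (z p) (z v) := by
      rw [hc]
      exact colorSeqN_pos_of_edge hBpv (Or.inl ⟨rfl, rfl⟩)
    obtain ⟨eQ, hAeQ, hcndQ⟩ := exists_edge_of_colorSeqN_pos hcolA
    set q := eQ.1.1 with hq
    set r := eQ.1.2 with hr
    have hqr : q < r := eQ.2
    have hcnd : z q = z p ∧ z r = z v := by
      rcases hcndQ with h' | ⟨h1, h2⟩
      · exact h'
      · exfalso
        have hle : z q ≤ z r := hz (le_of_lt hqr)
        rw [h1, h2] at hle
        exact absurd (lt_of_lt_of_le hzpu hzuv) (not_lt.2 hle)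
    have hqu : q < u := by
      by_contra hcon
      push_neg at hcon
      have : z u ≤ z q := hz hcon
      rw [hcnd.1] at this
      exact absurd hzpu (not_lt.2 this)
    have hQne : eQ ≠ E := by
      intro h
      have : q = u := congrArg (fun e : Edge n => e.1.1) h
      omega
    -- Step 3: r = v (else nested violation with z r = z v)
    have hrv : r = v := by
      have hsh := shape eQ (Or.inl hAeQ) hQne
      rcases hsh with h' | h'
      · exfalso
        exact hA (decV2 z hqu huv h' (Or.inr hcnd.2.symm) (hqu.trans (huv.trans h')) hAeQ hAE)
      · exact Fin.ext h'.1.symm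
    have hqv : q < v := hrv ▸ hqr
    have hAqv : 0 < A ⟨(q, v), hqv⟩ := by
      have : eQ = ⟨(q, v), hqv⟩ := Subtype.ext (Prod.ext rfl hrv)
      rwa [this] at hAeQ
    -- Steps 4-6 : trichotomy q vs p
    rcases lt_trichotomy q p with hqp | hqp | hqp
    · -- q < p : B has an edge (q, t) with t > v; nested violation in B with (p, v)
      have hdegB : 0 < degSeqN B q := by
        rw [← hd]
        exact degSeqN_pos_of_edge hAqv (Or.inl rfl)
      obtain ⟨eB, hBeB, hmB⟩ := exists_edge_of_degSeqN_pos hdegB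
      have hBne : eB ≠ E := by
        intro h
        rw [h] at hBeB
        omega
      have hmB1 : eB.1.1 = q := by
        rcases hmB with h' | h'
        · exact h'
        · exfalso
          have hsh := shape eB (Or.inr hBeB) hBne
          have h1 : (eB.1.2 : ℕ) = (q : ℕ) := congrArg Fin.val h'
          have h2 : (q : ℕ) < (u : ℕ) := hqu
          have h3 : (u : ℕ) < (v : ℕ) := huv
          omega
      set t := eB.1.2 with ht
      have hqt : q < t := hmB1 ▸ eB.2
      have htv : (v : ℕ) < (t : ℕ) := by
        have hsh := shape eB (Or.inr hBeB) hBne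
        rcases hsh with h' | h'
        · exact h'
        · exfalso
          have heq : eB = ⟨(q, v), hqv⟩ :=
            Subtype.ext (Prod.ext hmB1 (Fin.ext h'.1.symm))
          rw [heq] at hBeB
          rcases hdisj ⟨(q, v), hqv⟩ with h0 | h0 <;> omega
      have hBqt : 0 < B ⟨(q, t), hqt⟩ := by
        have : eB = ⟨(q, t), hqt⟩ := Subtype.ext (Prod.ext hmB1 rfl)
        rwa [this] at hBeB
      exact hB (decV2 z hqp hpv htv (Or.inl hcnd.1) (hqp.trans (hpv.trans htv)) hBqt hBpv)
    · -- q = p : contradiction with disjointness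
      have : (⟨(q, v), hqv⟩ : Edge n) = ⟨(p, v), hpv⟩ :=
        Subtype.ext (Prod.ext hqp rfl)
      rw [this] at hAqv
      omega
    · -- p < q : nested violation in A with (p, s) and (q, v)
      exact hA (decV2 z hqp hqv hsv (Or.inl hcnd.1.symm) (hqp.trans (hqv.trans hsv)) hAps hAqv)
  · -- Case H2 : counting argument
    push_neg at hH1
    have hBv : ∀ e : Edge n, 0 < B e → e.1.2 ≠ v := by
      intro e hBe hev
      have hne : e ≠ E := by
        intro h
        rw [h] at hBe
        omega
      have hsh := shape e (Or.inr hBe) hne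
      rcases hsh with h' | h'
      · rw [hev] at h'
        omega
      · have hle : (u : ℕ) ≤ ((e.1.1 : Fin n) : ℕ) := hH1 e hBe hev
        omega
    -- weights
    set ω : Fin n → ℕ := fun m => if z m = z v ∧ m ≤ v then 1 else 0 with hω
    have hT : ∑ e : Edge n, (ω e.1.1 + ω e.1.2) * A e
        = ∑ e : Edge n, (ω e.1.1 + ω e.1.2) * B e := by
      rw [← degSeqN_weight, ← degSeqN_weight]
      exact Finset.sum_congr rfl fun m _ => by rw [hd m]
    have hS : (∑ e : Edge n, (if z e.1.1 = z v then 1 else 0) * A e)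
        = ∑ e : Edge n, (if z e.1.1 = z v then 1 else 0) * B e := by
      rw [sS_eq z hz A (z v), sS_eq z hz B (z v)]
      exact Finset.sum_congr rfl fun l _ => hc (z v) l
    have hwA : ∀ e : Edge n, 0 < A e →
        ω e.1.1 + ω e.1.2
          = (if z e.1.1 = z v then 1 else 0) + (if e.1.2 = v then 1 else 0) := by
      intro e hAe
      have h2 : ω e.1.2 = (if e.1.2 = v then 1 else 0) := by
        by_cases he : e = E
        · subst he
          simp [hω, hE]
        · have hsh := shape e (Or.inl hAe) he
          rcases hsh with h' | h'
          · have hne2 : e.1.2 ≠ v := fun h => by rw [h] at h'; omega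
            have hnle : ¬ (e.1.2 ≤ v) := by
              intro hle
              have : (e.1.2 : ℕ) ≤ (v : ℕ) := hle
              omega
            rw [if_neg hne2, hω]
            simp only
            rw [if_neg (fun hcon => hnle hcon.2)]
          · have he2 : e.1.2 = v := Fin.ext h'.1.symm
            rw [if_pos he2, hω]
            simp only
            rw [if_pos ⟨by rw [he2], le_of_eq he2⟩]
      have h1 : ω e.1.1 = (if z e.1.1 = z v then 1 else 0) := by
        by_cases hz1 : z e.1.1 = z v
        · have hle : e.1.1 ≤ v := by
            by_contra hgt
            push_neg at hgt
            exact hA (decV1 z huv hgt e.2 hz1.symm hAE hAe)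
          rw [if_pos hz1, hω]
          simp only
          rw [if_pos ⟨hz1, hle⟩]
        · rw [if_neg hz1, hω]
          simp only
          rw [if_neg (fun hcon => hz1 hcon.1)]
      rw [h1, h2]
    have hwB : ∀ e : Edge n, 0 < B e →
        ω e.1.1 + ω e.1.2 ≤ (if z e.1.1 = z v then 1 else 0) := by
      intro e hBe
      have hne : e ≠ E := by
        intro h
        rw [h] at hBe
        omega
      have h2 : ω e.1.2 = 0 := by
        have hsh := shape e (Or.inr hBe) hne
        rcases hsh with h' | h'
        · have hnle : ¬ (e.1.2 ≤ v) := by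
            intro hle
            have : (e.1.2 : ℕ) ≤ (v : ℕ) := hle
            omega
          rw [hω]
          simp only
          rw [if_neg (fun hcon => hnle hcon.2)]
        · exact absurd (Fin.ext h'.1.symm) (hBv e hBe)
      have h1 : ω e.1.1 ≤ (if z e.1.1 = z v then 1 else 0) := by
        rw [hω]
        simp only
        by_cases hcon : z e.1.1 = z v ∧ e.1.1 ≤ v
        · rw [if_pos hcon, if_pos hcon.1]
        · rw [if_neg hcon]
          omega
      omega
    -- assemble
    have hTA : ∑ e : Edge n, (ω e.1.1 + ω e.1.2) * A e
        = (∑ e : Edge n, (if z e.1.1 = z v then 1 else 0) * A e)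
          + ∑ e : Edge n, (if e.1.2 = v then 1 else 0) * A e := by
      rw [← Finset.sum_add_distrib]
      refine Finset.sum_congr rfl fun e _ => ?_
      rcases Nat.eq_zero_or_pos (A e) with h0 | h0
      · rw [h0, mul_zero, mul_zero, mul_zero, add_zero]
      · rw [hwA e h0, add_mul]
    have hTB : ∑ e : Edge n, (ω e.1.1 + ω e.1.2) * B e
        ≤ ∑ e : Edge n, (if z e.1.1 = z v then 1 else 0) * B e := by
      refine Finset.sum_le_sum fun e _ => ?_
      rcases Nat.eq_zero_or_pos (B e) with h0 | h0
      · rw [h0, mul_zero, mul_zero]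
      · exact Nat.mul_le_mul_right _ (hwB e h0)
    have hY : 0 < ∑ e : Edge n, (if e.1.2 = v then 1 else 0) * A e := by
      have hterm : 0 < (if E.1.2 = v then 1 else 0) * A E := by
        rw [if_pos rfl, one_mul]
        exact hAE
      calc 0 < (if E.1.2 = v then 1 else 0) * A E := hterm
        _ ≤ _ := Finset.single_le_sum
          (f := fun e : Edge n => (if e.1.2 = v then 1 else 0) * A e)
          (fun e' _ => Nat.zero_le _) (Finset.mem_univ E)
    omega

end GBOrder
namespace GBOrder

variable {n k : ℕ}

lemma degSeqN_add (x y : Edge n → ℕ) (m : Fin n) :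
    degSeqN (fun e => x e + y e) m = degSeqN x m + degSeqN y m := by
  rw [degSeqN_eq, degSeqN_eq, degSeqN_eq, ← Finset.sum_add_distrib]
  exact Finset.sum_congr rfl fun e _ => by ring

lemma colorSeqN_add (z : Fin n → Fin k) (x y : Edge n → ℕ) (i j : Fin k) :
    colorSeqN z (fun e => x e + y e) i j = colorSeqN z x i j + colorSeqN z y i j := by
  rw [colorSeqN, colorSeqN, colorSeqN, ← Finset.sum_add_distrib]
  refine Finset.sum_congr rfl fun e _ => ?_
  split_ifs <;> simp

lemma degSeq_sub (x y : Edge n → ℤ) (m : Fin n) :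
    degSeq (fun e => x e - y e) m = degSeq x m - degSeq y m := by
  rw [degSeq_eq, degSeq_eq, degSeq_eq, ← Finset.sum_sub_distrib]
  exact Finset.sum_congr rfl fun e _ => by ring

lemma colorSeq_sub (z : Fin n → Fin k) (x y : Edge n → ℤ) (i j : Fin k) :
    colorSeq z (fun e => x e - y e) i j = colorSeq z x i j - colorSeq z y i j := by
  rw [colorSeq, colorSeq, colorSeq, ← Finset.sum_sub_distrib]
  refine Finset.sum_congr rfl fun e _ => ?_
  split_ifs <;> simp

lemma degSeqN_cast (x : Edge n → ℕ) (m : Fin n) :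
    ((degSeqN x m : ℤ)) = degSeq (fun e => ((x e : ℤ))) m := by
  rw [degSeqN_eq, degSeq_eq, Nat.cast_sum]
  refine Finset.sum_congr rfl fun e _ => ?_
  split_ifs <;> push_cast <;> ring

lemma colorSeqN_cast (z : Fin n → Fin k) (x : Edge n → ℕ) (i j : Fin k) :
    ((colorSeqN z x i j : ℤ)) = colorSeq z (fun e => ((x e : ℤ))) i j := by
  rw [colorSeqN, colorSeq, Nat.cast_sum]
  refine Finset.sum_congr rfl fun e _ => ?_
  split_ifs <;> push_cast <;> ring

lemma MSet_balance {z : Fin n → Fin k} {γ : Edge n → ℤ} (hγ : γ ∈ MSet z) :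
    (∀ m, degSeqN (fun e => (γ e).toNat) m = degSeqN (fun e => (-γ e).toNat) m) ∧
    (∀ i j, colorSeqN z (fun e => (γ e).toNat) i j
      = colorSeqN z (fun e => (-γ e).toNat) i j) := by
  obtain ⟨⟨hdeg, hcol⟩, -⟩ := hγ
  have hfun : (fun e => (((γ e).toNat : ℤ)) - (((-γ e).toNat : ℤ))) = γ :=
    funext fun e => Int.toNat_sub_toNat_neg (γ e)
  constructor
  · intro m
    have h0 : degSeq γ m = 0 := hdeg m
    rw [← hfun, degSeq_sub, ← degSeqN_cast, ← degSeqN_cast] at h0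
    omega
  · intro i j
    have h0 : colorSeq z γ i j = 0 := hcol i j
    rw [← hfun, colorSeq_sub, ← colorSeqN_cast, ← colorSeqN_cast] at h0
    omega

/-- **Main lemma**: if `A` is not the minimum of its fiber, there is a decreasing
applicable move. -/
lemma main_lemma (z : Fin n → Fin k) (hz : Monotone z) (A B : Edge n → ℕ)
    (hdeg : ∀ m, degSeqN A m = degSeqN B m)
    (hcol : ∀ i j, colorSeqN z A i j = colorSeqN z B i j)
    (hflex : flex B A) : DecMove z A := by
  revert B
  refine flex_wf.induction
    (C := fun A => ∀ B : Edge n → ℕ, (∀ m, degSeqN A m = degSeqN B m) →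
      (∀ i j, colorSeqN z A i j = colorSeqN z B i j) → flex B A → DecMove z A) A ?_
  clear A
  intro A ihA B
  revert B
  refine fun B => flex_wf.induction
    (C := fun B => (∀ m, degSeqN A m = degSeqN B m) →
      (∀ i j, colorSeqN z A i j = colorSeqN z B i j) → flex B A → DecMove z A) B ?_
  clear B
  intro B ihB hdeg hcol hflex
  by_cases hcommon : ∃ e, 0 < A e ∧ 0 < B e
  · -- remove a common edge and use the outer induction
    obtain ⟨e₀, hAe, hBe⟩ := hcommon
    set χe : Edge n → ℕ := fun d => if d = e₀ then 1 else 0 with hχe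
    set A' : Edge n → ℕ := fun d => A d - χe d with hA'
    set B' : Edge n → ℕ := fun d => B d - χe d with hB'
    have hAeq : A = fun d => A' d + χe d := by
      funext d
      simp only [hA', hχe]
      by_cases hde : d = e₀
      · subst hde; simp; omega
      · simp [hde]
    have hBeq : B = fun d => B' d + χe d := by
      funext d
      simp only [hB', hχe]
      by_cases hde : d = e₀
      · subst hde; simp; omega
      · simp [hde]
    have hdeg' : ∀ m, degSeqN A' m = degSeqN B' m := by
      intro m
      have h1 : degSeqN A m = degSeqN A' m + degSeqN χe m := by
        conv_lhs => rw [hAeq]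
        exact degSeqN_add A' χe m
      have h2 : degSeqN B m = degSeqN B' m + degSeqN χe m := by
        conv_lhs => rw [hBeq]
        exact degSeqN_add B' χe m
      have := hdeg m
      omega
    have hcol' : ∀ i j, colorSeqN z A' i j = colorSeqN z B' i j := by
      intro i j
      have h1 : colorSeqN z A i j = colorSeqN z A' i j + colorSeqN z χe i j := by
        conv_lhs => rw [hAeq]
        exact colorSeqN_add z A' χe i j
      have h2 : colorSeqN z B i j = colorSeqN z B' i j + colorSeqN z χe i j := by
        conv_lhs => rw [hBeq]
        exact colorSeqN_add z B' χe i j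
      have := hcol i j
      omega
    have hflex' : flex B' A' := by
      obtain ⟨j₀, hj₀, hlt₀⟩ := hflex
      refine ⟨j₀, fun d hd => ?_, ?_⟩
      · simp only [hA', hB']
        rw [hj₀ d hd]
      · simp only [hA', hB', hχe]
        by_cases hde : j₀ = e₀
        · subst hde
          simp
          omega
        · simp only [if_neg hde]
          omega
    have hA'A : flex A' A := by
      refine ⟨e₀, fun d hd => ?_, ?_⟩
      · have hne : d ≠ e₀ := fun h => by rw [h] at hd; exact lt_irrefl _ hd
        simp only [hA', hχe]
        simp [hne]
      · simp only [hA', hχe]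
        simp
        omega
    obtain ⟨γ, hγ, hle, hflexγ⟩ := ihA A' hA'A B' hdeg' hcol' hflex'
    refine ⟨γ, hγ, fun e => ?_, hflexγ⟩
    refine le_trans (hle e) ?_
    simp only [hA']
    omega
  · push_neg at hcommon
    have hdisj : ∀ e, A e = 0 ∨ B e = 0 := by
      intro e
      rcases Nat.eq_zero_or_pos (A e) with h | h
      · exact Or.inl h
      · rcases Nat.eq_zero_or_pos (B e) with h' | h'
        · exact Or.inr h'
        · exact absurd h' (by simpa using hcommon e h)
    by_cases hBdec : DecMove z B
    · -- reduce B and use the inner induction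
      obtain ⟨γ, hγ, hle, hflexγ⟩ := hBdec
      obtain ⟨hbal1, hbal2⟩ := MSet_balance hγ
      set B'' : Edge n → ℕ := fun d => B d - (γ d).toNat + (-γ d).toNat with hB''
      have hkey : B'' = fun d => (B d - (γ d).toNat) + (-γ d).toNat := rfl
      have hsplit : (fun d => B'' d + (γ d).toNat)
          = fun d => (B d - (γ d).toNat) + ((-γ d).toNat + (γ d).toNat) := by
        funext d
        simp only [hB'']
        omega
      have hsplitB : B = fun d => (B d - (γ d).toNat) + (γ d).toNat := by
        funext d
        have := hle d
        omega
      have hdegB'' : ∀ m, degSeqN B'' m = degSeqN B m := by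
        intro m
        have h1 : degSeqN (fun d => B'' d + (γ d).toNat) m
            = degSeqN B'' m + degSeqN (fun d => (γ d).toNat) m :=
          degSeqN_add _ _ m
        have h2 : degSeqN (fun d => B'' d + (γ d).toNat) m
            = degSeqN (fun d => B d - (γ d).toNat) m
              + (degSeqN (fun d => (-γ d).toNat) m + degSeqN (fun d => (γ d).toNat) m) := by
          rw [hsplit]
          rw [show (fun d => B d - (γ d).toNat + ((-γ d).toNat + (γ d).toNat))
              = fun d => (B d - (γ d).toNat) + ((fun d' => (-γ d').toNat + (γ d').toNat) d) from rfl]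
          rw [degSeqN_add, degSeqN_add]
        have h3 : degSeqN B m = degSeqN (fun d => B d - (γ d).toNat) m
            + degSeqN (fun d => (γ d).toNat) m := by
          conv_lhs => rw [hsplitB]
          exact degSeqN_add _ _ m
        have h4 := hbal1 m
        omega
      have hcolB'' : ∀ i j, colorSeqN z B'' i j = colorSeqN z B i j := by
        intro i j
        have h1 : colorSeqN z (fun d => B'' d + (γ d).toNat) i j
            = colorSeqN z B'' i j + colorSeqN z (fun d => (γ d).toNat) i j :=
          colorSeqN_add z _ _ i j
        have h2 : colorSeqN z (fun d => B'' d + (γ d).toNat) i j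
            = colorSeqN z (fun d => B d - (γ d).toNat) i j
              + (colorSeqN z (fun d => (-γ d).toNat) i j
                + colorSeqN z (fun d => (γ d).toNat) i j) := by
          rw [hsplit]
          rw [show (fun d => B d - (γ d).toNat + ((-γ d).toNat + (γ d).toNat))
              = fun d => (B d - (γ d).toNat) + ((fun d' => (-γ d').toNat + (γ d').toNat) d) from rfl]
          rw [colorSeqN_add, colorSeqN_add]
        have h3 : colorSeqN z B i j = colorSeqN z (fun d => B d - (γ d).toNat) i j
            + colorSeqN z (fun d => (γ d).toNat) i j := by
          conv_lhs => rw [hsplitB]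
          exact colorSeqN_add z _ _ i j
        have h4 := hbal2 i j
        omega
      have hflexB'' : flex B'' B := by
        obtain ⟨j₀, hj₀, hlt₀⟩ := hflexγ
        refine ⟨j₀, fun d hd => ?_, ?_⟩
        · have h1 : (-γ d).toNat = (γ d).toNat := hj₀ d hd
          have h2 : (γ d).toNat ≤ B d := hle d
          simp only [hB'']
          omega
        · have h1 : (-γ j₀).toNat < (γ j₀).toNat := hlt₀
          have h2 : (γ j₀).toNat ≤ B j₀ := hle j₀
          simp only [hB'']
          omega
      exact ihB B'' hflexB''
        (fun m => by rw [hdeg m, ← hdegB'' m])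
        (fun i j => by rw [hcol i j, ← hcolB'' i j])
        (flex_trans hflexB'' hflex)
    · by_cases hAdec : DecMove z A
      · exact hAdec
      · exfalso
        have hSne : ((Finset.univ : Finset (Edge n)).filter
            (fun e => 0 < A e ∨ 0 < B e)).Nonempty := by
          obtain ⟨j₀, _, hlt₀⟩ := hflex
          exact ⟨j₀, by simp only [Finset.mem_filter, Finset.mem_univ, true_and]; left; omega⟩
        obtain ⟨E, hEmem, hEmin⟩ := Finset.exists_min_image _ ρ hSne
        simp only [Finset.mem_filter, Finset.mem_univ, true_and] at hEmem hEmin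
        have hmin : ∀ e : Edge n, 0 < A e ∨ 0 < B e → ρ E ≤ ρ e := fun e he => hEmin e he
        have hAE : 0 < A E := by
          obtain ⟨j₀, hj₀, hlt₀⟩ := hflex
          have hj₀mem : 0 < A j₀ ∨ 0 < B j₀ := Or.inl (by omega)
          have h1 : ρ E ≤ ρ j₀ := hmin j₀ hj₀mem
          rcases lt_or_eq_of_le h1 with h2 | h2
          · have h3 : B E = A E := hj₀ E h2
            rcases hEmem with h4 | h4
            · exact h4
            · omega
          · rw [rho_inj h2]
            omega
        exact core z hz A B hdeg hcol hdisj hAdec hBdec E hAE hmin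

end GBOrder
namespace GBOrder

variable {n k : ℕ}

open MvPolynomial

/-- The image exponent of a single edge variable. -/
noncomputable def σe (z : Fin n → Fin k) (e : Edge n) : (Fin n ⊕ Fin k × Fin k) →₀ ℕ :=
  Finsupp.single (Sum.inl e.1.1) 1 + Finsupp.single (Sum.inl e.1.2) 1 +
    Finsupp.single (Sum.inr (min (z e.1.1) (z e.1.2), max (z e.1.1) (z e.1.2))) 1

/-- The exponent map induced by `phiBeta`. -/
noncomputable def ψ (z : Fin n → Fin k) (α : Edge n →₀ ℕ) : (Fin n ⊕ Fin k × Fin k) →₀ ℕ :=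
  α.sum fun e c => c • σe z e

lemma prod_monomial {ι : Type*} (K : Type*) [Field K] (s : Finset ι)
    (h : ι → (Fin n ⊕ Fin k × Fin k) →₀ ℕ) :
    (∏ e ∈ s, (monomial (h e) (1 : K))) = monomial (∑ e ∈ s, h e) (1 : K) := by
  classical
  induction s using Finset.induction_on with
  | empty => simp [MvPolynomial.monomial_zero']
  | insert _ _ hx ih =>
      rw [Finset.prod_insert hx, Finset.sum_insert hx, ih, monomial_mul, one_mul]

lemma phi_monomial (K : Type*) [Field K] (z : Fin n → Fin k) (α : Edge n →₀ ℕ) (c : K) :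
    phiBeta K z (monomial α c) = monomial (ψ z α) c := by
  rw [phiBeta, aeval_monomial]
  have hg : ∀ e : Edge n,
      ((X (Sum.inl e.1.1) * X (Sum.inl e.1.2) *
        X (Sum.inr (min (z e.1.1) (z e.1.2), max (z e.1.1) (z e.1.2)))) :
          MvPolynomial (Fin n ⊕ Fin k × Fin k) K) = monomial (σe z e) 1 := by
    intro e
    rw [σe, X, X, X, monomial_mul, monomial_mul]
    norm_num
  have hprod : (α.prod fun e cnt =>
      ((X (Sum.inl e.1.1) * X (Sum.inl e.1.2) *
        X (Sum.inr (min (z e.1.1) (z e.1.2), max (z e.1.1) (z e.1.2)))) :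
          MvPolynomial (Fin n ⊕ Fin k × Fin k) K) ^ cnt) = monomial (ψ z α) 1 := by
    rw [Finsupp.prod]
    have : ∀ e ∈ α.support,
        ((X (Sum.inl e.1.1) * X (Sum.inl e.1.2) *
          X (Sum.inr (min (z e.1.1) (z e.1.2), max (z e.1.1) (z e.1.2)))) :
            MvPolynomial (Fin n ⊕ Fin k × Fin k) K) ^ (α e)
          = monomial (α e • σe z e) 1 := by
      intro e _
      rw [hg e, monomial_pow, one_pow]
    rw [Finset.prod_congr rfl this, prod_monomial]
    rfl
  rw [hprod, algebraMap_eq, C_mul_monomial, mul_one]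

lemma psi_inl (z : Fin n → Fin k) (α : Edge n →₀ ℕ) (m : Fin n) :
    ψ z α (Sum.inl m) = degSeqN ⇑α m := by
  rw [ψ, Finsupp.sum_apply, degSeqN_eq]
  rw [Finsupp.sum]
  rw [← Finset.sum_subset (Finset.subset_univ α.support) (by
    intro e _ he
    have h0 : α e = 0 := Finsupp.notMem_support_iff.1 he
    rw [h0]
    simp)]
  refine Finset.sum_congr rfl fun e _ => ?_
  rw [Finsupp.smul_apply, σe, Finsupp.add_apply, Finsupp.add_apply,
    Finsupp.single_apply, Finsupp.single_apply, Finsupp.single_apply]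
  simp only [Sum.inl.injEq, reduceCtorEq, if_false]
  rw [smul_eq_mul, mul_comm]
  ring

lemma cond_iff {z1 z2 i j : Fin k} (h : z1 ≤ z2) :
    ((z1 = i ∧ z2 = j) ∨ (z1 = j ∧ z2 = i)) ↔
      (min z1 z2 = min i j ∧ max z1 z2 = max i j) := by
  rw [min_eq_left h, max_eq_right h]
  constructor
  · rintro (⟨rfl, rfl⟩ | ⟨rfl, rfl⟩)
    · exact ⟨(min_eq_left h).symm, (max_eq_right h).symm⟩
    · exact ⟨(min_eq_right h).symm, (max_eq_left h).symm⟩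
  · rintro ⟨h1, h2⟩
    rcases le_total i j with hij | hij
    · rw [min_eq_left hij] at h1
      rw [max_eq_right hij] at h2
      exact Or.inl ⟨h1, h2⟩
    · rw [min_eq_right hij] at h1
      rw [max_eq_left hij] at h2
      exact Or.inr ⟨h1, h2⟩

lemma psi_inr (z : Fin n → Fin k) (hz : Monotone z) (α : Edge n →₀ ℕ) (i j : Fin k) :
    ψ z α (Sum.inr (min i j, max i j)) = colorSeqN z ⇑α i j := by
  rw [ψ, Finsupp.sum_apply, colorSeqN]
  rw [Finsupp.sum]
  rw [← Finset.sum_subset (Finset.subset_univ α.support) (by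
    intro e _ he
    have h0 : α e = 0 := Finsupp.notMem_support_iff.1 he
    rw [h0]
    simp)]
  refine Finset.sum_congr rfl fun e _ => ?_
  rw [Finsupp.smul_apply, σe, Finsupp.add_apply, Finsupp.add_apply,
    Finsupp.single_apply, Finsupp.single_apply, Finsupp.single_apply]
  simp only [reduceCtorEq, if_false, Sum.inr.injEq]
  have hmono : z e.1.1 ≤ z e.1.2 := hz (le_of_lt e.2)
  by_cases hcond : (z e.1.1 = i ∧ z e.1.2 = j) ∨ (z e.1.1 = j ∧ z e.1.2 = i)
  · have := (cond_iff hmono).1 hcond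
    rw [if_pos hcond, if_pos (Prod.ext_iff.2 ⟨this.1, this.2⟩)]
    simp
  · have : ¬ ((min (z e.1.1) (z e.1.2), max (z e.1.1) (z e.1.2)) = (min i j, max i j)) := by
      intro hcon
      rw [Prod.ext_iff] at hcon
      exact hcond ((cond_iff hmono).2 ⟨hcon.1, hcon.2⟩)
    rw [if_neg hcond, if_neg this]
    simp

lemma exists_partner (K : Type*) [Field K] (z : Fin n → Fin k)
    (f : MvPolynomial (Edge n) K) (hker : f ∈ RingHom.ker (phiBeta K z).toRingHom)
    {A : Edge n →₀ ℕ} (hA : A ∈ f.support) :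
    ∃ B ∈ f.support, B ≠ A ∧ ψ z B = ψ z A := by
  classical
  have h0 : phiBeta K z f = 0 := hker
  rw [as_sum f, map_sum] at h0
  have h1 : (∑ α ∈ f.support, monomial (ψ z α) (coeff α f)) = 0 := by
    rw [← h0]
    exact Finset.sum_congr rfl fun α _ => (phi_monomial K z α (coeff α f)).symm
  have h2 : (∑ α ∈ f.support, if ψ z α = ψ z A then coeff α f else 0) = 0 := by
    rw [show (∑ α ∈ f.support, if ψ z α = ψ z A then coeff α f else 0)
        = coeff (ψ z A) (∑ α ∈ f.support, monomial (ψ z α) (coeff α f)) by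
      rw [coeff_sum]
      exact Finset.sum_congr rfl fun α _ => (coeff_monomial _ _ _).symm]
    rw [h1]
    rfl
  by_contra hc
  push_neg at hc
  have hfilter : f.support.filter (fun α => ψ z α = ψ z A) = {A} := by
    apply Finset.eq_singleton_iff_unique_mem.2
    constructor
    · exact Finset.mem_filter.2 ⟨hA, rfl⟩
    · intro B hB
      rw [Finset.mem_filter] at hB
      by_contra hne
      exact (hc B hB.1 hne) hB.2
  rw [← Finset.sum_filter, hfilter, Finset.sum_singleton] at h2
  exact (mem_support_iff.1 hA) h2

lemma exists_rel_max (s : Finset (Edge n →₀ ℕ)) (hs : s.Nonempty) :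
    ∃ a ∈ s, ∀ b ∈ s, b ≠ a → rel b a := by
  classical
  induction s using Finset.induction_on with
  | empty => exact absurd hs (by simp)
  | @insert x s hx ih =>
      rcases s.eq_empty_or_nonempty with rfl | hne
      · refine ⟨x, Finset.mem_insert_self x _, fun b hb hbne => ?_⟩
        simp only [Finset.mem_insert, Finset.notMem_empty, or_false] at hb
        exact absurd hb hbne
      · obtain ⟨a, ha, hmax⟩ := ih hne
        rcases rel_total x a with h | h | h
        · refine ⟨a, Finset.mem_insert_of_mem ha, fun b hb hbne => ?_⟩
          rcases Finset.mem_insert.1 hb with rfl | hb'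
          · exact h
          · exact hmax b hb' hbne
        · subst h
          refine ⟨x, Finset.mem_insert_self x _, fun b hb hbne => ?_⟩
          rcases Finset.mem_insert.1 hb with rfl | hb'
          · exact absurd rfl hbne
          · exact hmax b hb' hbne
        · refine ⟨x, Finset.mem_insert_self x _, fun b hb hbne => ?_⟩
          rcases Finset.mem_insert.1 hb with rfl | hb'
          · exact absurd rfl hbne
          · by_cases hba : b = a
            · rw [hba]; exact h
            · exact rel_trans (hmax b hb' hba) h
end GBOrder

/-- There is a monomial order `≻` on `K[x_e : e ∈ P]` (depending only on
`n`) such that for every non-decreasing coloring `z`, the quadratic binomials of `M_{n,z}`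
form a Gröbner basis of the toric ideal `I_{DC_{n,z}}` with respect to `≻`. Here the
strict order `r` (with `r a b` meaning `a ≺ b`) is total, transitive, irreflexive,
well-founded, translation-invariant, and has `0` as least element. -/
theorem exists_groebner_order (n : ℕ) (hn : 0 < n) (K : Type*) [Field K] :
    ∃ r : (Edge n →₀ ℕ) → (Edge n →₀ ℕ) → Prop,
      (∀ a b, r a b ∨ a = b ∨ r b a) ∧
      (∀ a b c, r a b → r b c → r a c) ∧
      (∀ a, ¬ r a a) ∧
      WellFounded r ∧
      (∀ a b δ, r a b → r (a + δ) (b + δ)) ∧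
      (∀ a, a ≠ 0 → r 0 a) ∧
      (∀ (k : ℕ), 0 < k → ∀ z : Fin n → Fin k, Monotone z →
        ∀ f : MvPolynomial (Edge n) K,
          f ∈ RingHom.ker (phiBeta K z).toRingHom → f ≠ 0 →
            ∃ γ ∈ MSet z, ∃ lγ lf : Edge n →₀ ℕ,
              IsLeading r (binom K γ) lγ ∧ IsLeading r f lf ∧ lγ ≤ lf) := by
  classical
  refine ⟨GBOrder.rel, GBOrder.rel_total, fun a b c hab hbc => GBOrder.rel_trans hab hbc,
    GBOrder.rel_irrefl, GBOrder.rel_wf, fun a b δ h => GBOrder.rel_add h,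
    fun a ha => GBOrder.rel_zero ha, ?_⟩
  intro k hk z hzmono f hker hf0
  have hsupp : f.support.Nonempty :=
    Finset.nonempty_iff_ne_empty.2 (fun h => hf0 (MvPolynomial.support_eq_empty.1 h))
  obtain ⟨A, hAmem, hAmax⟩ := GBOrder.exists_rel_max f.support hsupp
  obtain ⟨B, hBmem, hBne, hψ⟩ := GBOrder.exists_partner K z f hker hAmem
  have hdeg : ∀ m, degSeqN ⇑A m = degSeqN ⇑B m := fun m => by
    rw [← GBOrder.psi_inl z A m, ← GBOrder.psi_inl z B m, hψ]
  have hcol : ∀ i j, colorSeqN z ⇑A i j = colorSeqN z ⇑B i j := fun i j => by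
    rw [← GBOrder.psi_inr z hzmono A i j, ← GBOrder.psi_inr z hzmono B i j, hψ]
  have hflex : GBOrder.flex ⇑B ⇑A := GBOrder.rel_iff_flex.1 (hAmax B hBmem hBne)
  obtain ⟨γ, hγMem, hle, hflexγ⟩ := GBOrder.main_lemma z hzmono ⇑A ⇑B hdeg hcol hflex
  have hrelpm : GBOrder.rel (expNeg γ) (expPos γ) := by
    rw [expPos, expNeg]
    exact GBOrder.flex_iff_rel.1 hflexγ
  have hne : expPos γ ≠ expNeg γ := fun h => GBOrder.rel_irrefl _ (h ▸ hrelpm)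
  refine ⟨γ, hγMem, expPos γ, A, ⟨?_, ?_⟩, ⟨hAmem, fun β hβ hne' => hAmax β hβ hne'⟩, ?_⟩
  · rw [MvPolynomial.mem_support_iff, binom, MvPolynomial.coeff_sub,
      MvPolynomial.coeff_monomial, if_pos rfl, MvPolynomial.coeff_monomial,
      if_neg (fun h : expNeg γ = expPos γ => hne h.symm)]
    norm_num
  · intro β hβ hβne
    rw [MvPolynomial.mem_support_iff, binom, MvPolynomial.coeff_sub,
      MvPolynomial.coeff_monomial, MvPolynomial.coeff_monomial] at hβ
    have hβm : β = expNeg γ := by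
      by_contra hc
      rw [if_neg (fun h : expPos γ = β => hβne h.symm),
        if_neg (fun h : expNeg γ = β => hc h.symm)] at hβ
      norm_num at hβ
    rw [hβm]
    exact hrelpm
  · rw [Finsupp.le_def]
    intro e
    have h1 : expPos γ e = (γ e).toNat := by
      simp [expPos]
    rw [h1]
    exact hle e
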